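/- Under the three identification conditions (no interference, positivity, and sequential no-unmeasured-confounding) in a discrete two-period setting, the counterfactual mean E[Y^{a₁,a₂}] equals the g-formula: Σ_{x₂} E[Y | A₁=a₁, X₂=x₂, A₂=a₂] P(X₂=x₂ | A₁=a₁). -/

import Mathlib

open MeasureTheory ProbabilityTheory

/-- g-formula identification, discrete two-period case: under
consistency/no interference, positivity, and sequential no-unmeasured-confounding,
the counterfactual mean E[Y^{a₁,a₂}] equals the g-formula
Σ_{x₂} E[Y | A₁=a₁, X₂=x₂, A₂=a₂] · P(X₂=x₂ | A₁=a₁). -/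
theorem stmt19 {Ω : Type*} [MeasurableSpace Ω] (μ : Measure Ω) [IsProbabilityMeasure μ]
    {α : Type*} [MeasurableSpace α] [MeasurableSingletonClass α]
    {S : Type*} [Fintype S] [MeasurableSpace S] [MeasurableSingletonClass S]
    (A1 A2 : Ω → α) (X2 : Ω → S) (Y Ypo : Ω → ℝ)
    (hA1 : Measurable A1) (hA2 : Measurable A2) (hX2 : Measurable X2)
    (hYpoM : Measurable Ypo) (hYpoInt : Integrable Ypo μ) (hYInt : Integrable Y μ)
    (a1 a2 : α)
    -- (1) consistency / no interference: Y = Y^{a₁,a₂} on {A₁=a₁, A₂=a₂}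
    (hcons : ∀ ω, A1 ω = a1 → A2 ω = a2 → Y ω = Ypo ω)
    -- (2) positivity
    (hpos1 : 0 < μ {ω | A1 ω = a1})
    (hpos2 : ∀ x2, 0 < μ {ω | A1 ω = a1 ∧ X2 ω = x2} →
      0 < μ {ω | A1 ω = a1 ∧ X2 ω = x2 ∧ A2 ω = a2})
    -- (3a) sequential ignorability, stage 1: Y^{a₁,a₂} ⫫ A₁
    (hig1 : IndepFun Ypo A1 μ)
    -- (3b) sequential ignorability, stage 2: Y^{a₁,a₂} ⫫ A₂ given (A₁, X₂),
    -- expressed at the conditioning values (a₁, x₂):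
    (hig2 : ∀ x2,
      (∫ ω in {ω | A1 ω = a1 ∧ X2 ω = x2 ∧ A2 ω = a2}, Ypo ω ∂μ) *
          (μ {ω | A1 ω = a1 ∧ X2 ω = x2}).toReal =
      (∫ ω in {ω | A1 ω = a1 ∧ X2 ω = x2}, Ypo ω ∂μ) *
          (μ {ω | A1 ω = a1 ∧ X2 ω = x2 ∧ A2 ω = a2}).toReal) :
    ∫ ω, Ypo ω ∂μ =
      ∑ x2 : S,
        ((∫ ω in {ω | A1 ω = a1 ∧ X2 ω = x2 ∧ A2 ω = a2}, Y ω ∂μ) /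
            (μ {ω | A1 ω = a1 ∧ X2 ω = x2 ∧ A2 ω = a2}).toReal) *
          ((μ {ω | A1 ω = a1 ∧ X2 ω = x2}).toReal / (μ {ω | A1 ω = a1}).toReal) := by
  set S1 : Set Ω := {ω | A1 ω = a1} with hS1def
  have hS1m : MeasurableSet S1 := hA1 (measurableSet_singleton a1)
  have hS2m : ∀ x2, MeasurableSet {ω | A1 ω = a1 ∧ X2 ω = x2} := fun x2 =>
    (hA1 (measurableSet_singleton a1)).inter (hX2 (measurableSet_singleton x2))
  have hS3m : ∀ x2, MeasurableSet {ω | A1 ω = a1 ∧ X2 ω = x2 ∧ A2 ω = a2} := fun x2 =>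
    (hA1 (measurableSet_singleton a1)).inter
      ((hX2 (measurableSet_singleton x2)).inter (hA2 (measurableSet_singleton a2)))
  have hm1 : (μ S1).toReal ≠ 0 := by
    have := hpos1
    simp only [ENNReal.toReal_ne_zero]
    exact ⟨this.ne', measure_ne_top μ S1⟩
  -- Step A: Y = Ypo on S3
  have hYeq : ∀ x2, (∫ ω in {ω | A1 ω = a1 ∧ X2 ω = x2 ∧ A2 ω = a2}, Y ω ∂μ)
      = ∫ ω in {ω | A1 ω = a1 ∧ X2 ω = x2 ∧ A2 ω = a2}, Ypo ω ∂μ := by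
    intro x2
    refine setIntegral_congr_fun (hS3m x2) ?_
    intro ω hω
    exact hcons ω hω.1 hω.2.2
  -- Step B: each summand equals ∫_{S2} Ypo / m1
  have hterm : ∀ x2,
      ((∫ ω in {ω | A1 ω = a1 ∧ X2 ω = x2 ∧ A2 ω = a2}, Y ω ∂μ) /
          (μ {ω | A1 ω = a1 ∧ X2 ω = x2 ∧ A2 ω = a2}).toReal) *
        ((μ {ω | A1 ω = a1 ∧ X2 ω = x2}).toReal / (μ S1).toReal)
      = (∫ ω in {ω | A1 ω = a1 ∧ X2 ω = x2}, Ypo ω ∂μ) / (μ S1).toReal := by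
    intro x2
    rw [hYeq x2]
    by_cases h2 : μ {ω | A1 ω = a1 ∧ X2 ω = x2} = 0
    · have hz : (∫ ω in {ω | A1 ω = a1 ∧ X2 ω = x2}, Ypo ω ∂μ) = 0 := by
        rw [Measure.restrict_eq_zero.2 h2, integral_zero_measure]
      rw [hz, h2]
      simp
    · have h2' : 0 < μ {ω | A1 ω = a1 ∧ X2 ω = x2} := pos_iff_ne_zero.mpr h2
      have h3 := hpos2 x2 h2'
      have m3ne : (μ {ω | A1 ω = a1 ∧ X2 ω = x2 ∧ A2 ω = a2}).toReal ≠ 0 := by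
        simp only [ENNReal.toReal_ne_zero]
        exact ⟨h3.ne', measure_ne_top _ _⟩
      have m2ne : (μ {ω | A1 ω = a1 ∧ X2 ω = x2}).toReal ≠ 0 := by
        simp only [ENNReal.toReal_ne_zero]
        exact ⟨h2, measure_ne_top _ _⟩
      have key := hig2 x2
      field_simp
      linear_combination key
  rw [Finset.sum_congr rfl fun x2 _ => hterm x2]
  rw [← Finset.sum_div]
  -- Step C: sum of ∫_{S2 x} Ypo = ∫_{S1} Ypo
  have hunion : (⋃ x2 : S, {ω | A1 ω = a1 ∧ X2 ω = x2}) = S1 := by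
    ext ω; simp [hS1def]
  have hsum : ∑ x2 : S, (∫ ω in {ω | A1 ω = a1 ∧ X2 ω = x2}, Ypo ω ∂μ)
      = ∫ ω in S1, Ypo ω ∂μ := by
    rw [← hunion, integral_iUnion (fun x2 => hS2m x2)
      (fun i j hij => by
        simp only [Set.disjoint_left]
        rintro ω ⟨-, hi⟩ ⟨-, hj⟩
        exact hij (hi ▸ hj ▸ rfl))
      (hYpoInt.integrableOn)]
    exact (tsum_fintype _).symm
  rw [hsum]
  -- Step D: independence
  have hind : (∫ ω in S1, Ypo ω ∂μ) = (∫ ω, Ypo ω ∂μ) * (μ S1).toReal := by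
    have hGm : Measurable (Set.indicator ({a1} : Set α) (1 : α → ℝ)) :=
      measurable_const.indicator (measurableSet_singleton a1)
    have hindep : IndepFun Ypo ((Set.indicator ({a1} : Set α) (1 : α → ℝ)) ∘ A1) μ :=
      hig1.comp measurable_id hGm
    have hcompeq : (Set.indicator ({a1} : Set α) (1 : α → ℝ)) ∘ A1
        = Set.indicator S1 (1 : Ω → ℝ) := by
      funext ω
      by_cases h : A1 ω = a1 <;> simp [Set.indicator, h, hS1def]
    have hGint : Integrable ((Set.indicator ({a1} : Set α) (1 : α → ℝ)) ∘ A1) μ := by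
      rw [hcompeq]
      exact (integrable_const (1:ℝ)).indicator hS1m
    have := hindep.integral_mul_eq_mul_integral hYpoInt.aestronglyMeasurable hGint.aestronglyMeasurable
    rw [hcompeq] at this
    have hL : (∫ ω, (Ypo * Set.indicator S1 (1 : Ω → ℝ)) ω ∂μ) = ∫ ω in S1, Ypo ω ∂μ := by
      rw [← integral_indicator hS1m]
      congr 1
      funext ω
      by_cases h : ω ∈ S1 <;> simp [Set.indicator, h]
    have hR : (∫ ω, Set.indicator S1 (1 : Ω → ℝ) ω ∂μ) = (μ S1).toReal := by
      rw [integral_indicator hS1m]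
      simp [Measure.real]
    rw [hL, hR] at this
    exact this
  rw [hind, mul_div_assoc, div_self hm1, mul_one]
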